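/- For all x ≤ 1, exp(x) ≤ 1 + x + (e−2)·x². -/

import Mathlib

open scoped Nat

private lemma exp_le_quadratic_of_nonpos (x : ℝ) (hx : x ≤ 0) :
    Real.exp x ≤ 1 + x + x ^ 2 / 2 := by
  set f : ℝ → ℝ := fun y => 1 + y + y ^ 2 / 2 - Real.exp y with hf
  have hderiv : ∀ y, HasDerivAt f (1 + y - Real.exp y) y := by
    intro y
    have h1 : HasDerivAt (fun y : ℝ => 1 + y + y ^ 2 / 2) (1 + y) y := by
      have := (((hasDerivAt_id y).const_add 1).add ((hasDerivAt_pow 2 y).div_const 2))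
      simp at this
      exact this
    exact h1.sub (Real.hasDerivAt_exp y)
  have hmono : Antitone f := by
    apply antitone_of_deriv_nonpos
    · exact fun y => (hderiv y).differentiableAt
    · intro y
      rw [(hderiv y).deriv]
      linarith [Real.add_one_le_exp y]
  have h0 : f 0 = 0 := by simp [hf]
  have := hmono hx
  rw [h0] at this
  simp only [hf] at this
  linarith

theorem stmt_13 (x : ℝ) (hx : x ≤ 1) :
    Real.exp x ≤ 1 + x + (Real.exp 1 - 2) * x ^ 2 := by
  have he : (2.7182818283 : ℝ) < Real.exp 1 := Real.exp_one_gt_d9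
  rcases le_or_gt x 0 with h0 | h0
  · have h1 := exp_le_quadratic_of_nonpos x h0
    nlinarith [sq_nonneg x]
  · -- 0 < x ≤ 1 : series argument
    have hsum : ∀ y : ℝ, Real.exp y = ∑' n : ℕ, y ^ n / n ! := by
      intro y
      rw [Real.exp_eq_exp_ℝ, NormedSpace.exp_eq_tsum_div]
    have hS : ∀ y : ℝ, Summable (fun n : ℕ => y ^ (n + 2) / (n + 2)!) := fun y =>
      (summable_nat_add_iff 2).2 (Real.summable_pow_div_factorial y)
    have hsplit : ∀ y : ℝ,
        Real.exp y = (1 + y) + ∑' n : ℕ, y ^ (n + 2) / (n + 2)! := by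
      intro y
      rw [hsum y, ← Summable.sum_add_tsum_nat_add 2 (Real.summable_pow_div_factorial y)]
      norm_num [Finset.sum_range_succ]
    have hkey : ∑' n : ℕ, x ^ (n + 2) / (n + 2)! ≤ x ^ 2 * ∑' n : ℕ, (1 : ℝ) ^ (n + 2) / (n + 2)! := by
      rw [← tsum_mul_left]
      refine Summable.tsum_le_tsum (fun n => ?_) (hS x) ((hS 1).mul_left _)
      have hxn : x ^ (n + 2) ≤ x ^ 2 := by
        calc x ^ (n + 2) = x ^ 2 * x ^ n := by ring
        _ ≤ x ^ 2 * 1 := by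
            exact mul_le_mul_of_nonneg_left (pow_le_one₀ h0.le hx) (sq_nonneg x)
        _ = x ^ 2 := by ring
      have : x ^ (n + 2) / (n + 2)! ≤ x ^ 2 / (n + 2)! :=
        div_le_div_of_nonneg_right hxn (by positivity)
      calc x ^ (n + 2) / (n + 2)! ≤ x ^ 2 / (n + 2)! := this
        _ = x ^ 2 * ((1:ℝ) ^ (n + 2) / (n + 2)!) := by rw [one_pow]; ring
    have h1 := hsplit x
    have h2 := hsplit 1
    have htail : ∑' n : ℕ, (1:ℝ) ^ (n + 2) / (n + 2)! = Real.exp 1 - 2 := by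
      linarith [h2]
    rw [h1]
    rw [htail] at hkey
    linarith
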